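/- Online gradient descent regret bound: let Δ ⊆ ℝ^K be a closed convex set of diameter at most √2 (more precisely, ‖p₁ − p‖² ≤ 2 for all p ∈ Δ). Suppose ℓ_t : Δ → ℝ are convex and differentiable with ‖∇ℓ_t(p)‖ ≤ L for all p and t. Run p_{t+1} = Proj_Δ(p_t − η ∇ℓ_t(p_t)) with η = √(2/T)/L. Then (1/T)∑_{t=1}^T ℓ_t(p_t) − min_{p∈Δ} (1/T)∑_{t=1}^T ℓ_t(p) ≤ √(2/T)·L. -/
import Mathlib


open scoped RealInnerProductSpace

/-- Online gradient descent regret bound: with diameter bound `‖p₁ − p‖² ≤ 2`,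
gradients bounded by `L`, convexity (stated via the first-order inequality), and step
size `η = √(2/T)/L`, the average regret is at most `√(2/T)·L`. -/
theorem stmt_3
    {K : ℕ} (Δ : Set (EuclideanSpace ℝ (Fin K)))
    (hne : Δ.Nonempty) (hclosed : IsClosed Δ) (hconv : Convex ℝ Δ)
    (proj : EuclideanSpace ℝ (Fin K) → EuclideanSpace ℝ (Fin K))
    (hproj_mem : ∀ x, proj x ∈ Δ)
    (hproj : ∀ x, ∀ p ∈ Δ, ‖proj x - p‖ ≤ ‖x - p‖)
    (T : ℕ) (hT : 1 ≤ T) (L : ℝ) (hL : 0 < L)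
    (ℓ : ℕ → EuclideanSpace ℝ (Fin K) → ℝ)
    (grad : ℕ → EuclideanSpace ℝ (Fin K) → EuclideanSpace ℝ (Fin K))
    -- convexity: first-order inequality for the (differentiable) losses
    (hconvex : ∀ t, ∀ x ∈ Δ, ∀ y ∈ Δ, ℓ t x - ℓ t y ≤ ⟪x - y, grad t x⟫)
    (hgradbound : ∀ t, ∀ x ∈ Δ, ‖grad t x‖ ≤ L)
    (η : ℝ) (hη : η = Real.sqrt (2 / T) / L)
    (p : ℕ → EuclideanSpace ℝ (Fin K))
    (hp1 : p 1 ∈ Δ)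
    (hdiam : ∀ q ∈ Δ, ‖p 1 - q‖ ^ 2 ≤ 2)
    (hiter : ∀ t, p (t + 1) = proj (p t - η • grad t (p t))) :
    ∀ q ∈ Δ,
      (1 / (T : ℝ)) * ∑ t ∈ Finset.Icc 1 T, ℓ t (p t)
        - (1 / (T : ℝ)) * ∑ t ∈ Finset.Icc 1 T, ℓ t q
      ≤ Real.sqrt (2 / T) * L := by
  intro q hq
  have hT' : (0:ℝ) < T := by exact_mod_cast Nat.lt_of_lt_of_le Nat.zero_lt_one hT
  set s : ℝ := Real.sqrt (2 / T) with hs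
  have hs_pos : 0 < s := Real.sqrt_pos.mpr (by positivity)
  have hs_sq : s ^ 2 = 2 / T := Real.sq_sqrt (by positivity)
  have hη_pos : 0 < η := by rw [hη]; exact div_pos hs_pos hL
  have hmem : ∀ t, 1 ≤ t → p t ∈ Δ := by
    intro t ht
    induction t with
    | zero => omega
    | succ n ih =>
      rcases Nat.lt_or_ge 1 (n+1) with h | h
      · rw [hiter]; exact hproj_mem _
      · have : n + 1 = 1 := le_antisymm h ht
        rw [this]; exact hp1
  have key : ∀ t ∈ Finset.Icc 1 T,
      2*η*(ℓ t (p t) - ℓ t q) ≤ ‖p t - q‖^2 - ‖p (t+1) - q‖^2 + η^2*L^2 := by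
    intro t ht
    have ht1 : 1 ≤ t := (Finset.mem_Icc.mp ht).1
    have hpt := hmem t ht1
    have hg : ‖grad t (p t)‖ ≤ L := hgradbound t _ hpt
    have hg0 : 0 ≤ ‖grad t (p t)‖ := norm_nonneg _
    have h1 : ‖p (t+1) - q‖ ≤ ‖(p t - η • grad t (p t)) - q‖ := by
      rw [hiter]; exact hproj _ q hq
    have h2 : ‖p (t+1) - q‖^2 ≤ ‖(p t - η • grad t (p t)) - q‖^2 :=
      pow_le_pow_left₀ (norm_nonneg _) h1 2
    have hexp : ‖(p t - η • grad t (p t)) - q‖^2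
        = ‖p t - q‖^2 - 2*η*⟪p t - q, grad t (p t)⟫ + η^2*‖grad t (p t)‖^2 := by
      have hre : (p t - η • grad t (p t)) - q = (p t - q) - η • grad t (p t) := by
        abel
      rw [hre, norm_sub_sq_real, real_inner_smul_right, norm_smul,
        Real.norm_eq_abs, abs_of_pos hη_pos, mul_pow]
      ring
    have hloss := hconvex t (p t) hpt q hq
    nlinarith [sq_nonneg η, mul_le_mul hg hg hg0 hL.le]
  have hsum := Finset.sum_le_sum key
  have tele : ∑ t ∈ Finset.Icc 1 T, (‖p t - q‖^2 - ‖p (t+1) - q‖^2 + η^2*L^2)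
      = ‖p 1 - q‖^2 - ‖p (T+1) - q‖^2 + T*(η^2*L^2) := by
    rw [Finset.sum_add_distrib, Finset.sum_const, Nat.card_Icc]
    have h1 : ∑ t ∈ Finset.Icc 1 T, (‖p t - q‖^2 - ‖p (t+1) - q‖^2)
        = ‖p 1 - q‖^2 - ‖p (T+1) - q‖^2 := by
      rw [← Finset.Ico_add_one_right_eq_Icc, Finset.sum_Ico_eq_sum_range,
        show T + 1 - 1 = T from rfl]
      calc ∑ i ∈ Finset.range T, (‖p (1+i) - q‖^2 - ‖p (1+(i+1)) - q‖^2)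
          = ∑ i ∈ Finset.range T,
              ((fun j => ‖p (j+1) - q‖^2) i - (fun j => ‖p (j+1) - q‖^2) (i+1)) := by
            refine Finset.sum_congr rfl fun i _ => ?_
            simp [Nat.add_comm]
        _ = ‖p (0+1) - q‖^2 - ‖p (T+1) - q‖^2 := Finset.sum_range_sub' _ T
        _ = ‖p 1 - q‖^2 - ‖p (T+1) - q‖^2 := by norm_num
    rw [h1]
    simp [nsmul_eq_mul]
  rw [tele] at hsum
  have hsum2 : 2*η*(∑ t ∈ Finset.Icc 1 T, ℓ t (p t) - ∑ t ∈ Finset.Icc 1 T, ℓ t q)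
      ≤ 2 + T*(η^2*L^2) := by
    have hd := hdiam q hq
    have h0 : (0:ℝ) ≤ ‖p (T+1) - q‖^2 := sq_nonneg _
    calc 2*η*(∑ t ∈ Finset.Icc 1 T, ℓ t (p t) - ∑ t ∈ Finset.Icc 1 T, ℓ t q)
        = ∑ t ∈ Finset.Icc 1 T, 2*η*(ℓ t (p t) - ℓ t q) := by
          rw [← Finset.sum_sub_distrib, Finset.mul_sum]
      _ ≤ ‖p 1 - q‖^2 - ‖p (T+1) - q‖^2 + T*(η^2*L^2) := hsum
      _ ≤ 2 + T*(η^2*L^2) := by linarith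
  -- arithmetic finish
  have hηval : 2 + T*(η^2*L^2) = 2*η*(T*(s*L)) := by
    have hTs : (T:ℝ) * s ^ 2 = 2 := by rw [hs_sq]; field_simp
    rw [hη]
    field_simp
    nlinarith [hTs]
  rw [hηval] at hsum2
  have hreg : ∑ t ∈ Finset.Icc 1 T, ℓ t (p t) - ∑ t ∈ Finset.Icc 1 T, ℓ t q
      ≤ T*(s*L) := by
    exact le_of_mul_le_mul_left hsum2 (by positivity)
  rw [← mul_sub]
  calc (1/(T:ℝ)) * (∑ t ∈ Finset.Icc 1 T, ℓ t (p t) - ∑ t ∈ Finset.Icc 1 T, ℓ t q)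
      ≤ (1/(T:ℝ)) * (T*(s*L)) := by
        apply mul_le_mul_of_nonneg_left hreg (by positivity)
    _ = s * L := by field_simp
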